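/- There exists a constant C > 0 such that for every real λ ≠ 0 one has c(λ) ≠ 0 and |c(λ)|^{−2} ≤ C · λ² · (1 + |λ|)^{n−3}. -/

import Mathlib

open Complex Real


/-- The Harish–Chandra `c`-function of a Damek–Ricci space with parameters `m, k`:
`c(λ) = Γ(n/2) 2^{Q-2iλ} Γ(2iλ) / (Γ(iλ + Q/2) Γ(iλ + m/4 + 1/2))`,
where `Q = m/2 + k` and `n = m + k + 1`. -/
noncomputable def cFun (m k : ℕ) (z : ℂ) : ℂ :=
  Complex.Gamma (((m : ℂ) + k + 1) / 2) *
    (2 : ℂ) ^ (((m : ℂ) / 2 + k) - 2 * Complex.I * z) *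
    Complex.Gamma (2 * Complex.I * z) /
    (Complex.Gamma (Complex.I * z + ((m : ℂ) / 2 + k) / 2) *
      Complex.Gamma (Complex.I * z + (m : ℂ) / 4 + 1 / 2))

section Auxiliary

private lemma abs_Gamma_I_add_one_sq (t : ℝ) (ht : 0 < t) :
    (‖Complex.Gamma (Complex.I * t + 1)‖)^2 = π * t / Real.sinh (π * t) := by
  have h0 : Complex.I * (t:ℂ) ≠ 0 := by
    simp [Complex.ext_iff, ht.ne']
  have h1 : Complex.Gamma (Complex.I * t + 1) = Complex.I * t * Complex.Gamma (Complex.I * t) :=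
    Complex.Gamma_add_one _ h0
  have hs : Real.sinh (π * t) ≠ 0 := (Real.sinh_pos_iff.mpr (by positivity)).ne'
  have hs' : ((Real.sinh (π * t) : ℝ) : ℂ) ≠ 0 := Complex.ofReal_ne_zero.mpr hs
  have hsin : Complex.sin (π * (Complex.I * t)) = (Real.sinh (π * t) : ℂ) * Complex.I := by
    rw [show (π:ℂ) * (Complex.I * t) = ((π * t : ℝ) : ℂ) * Complex.I by push_cast; ring,
      Complex.sin_mul_I, Complex.ofReal_sinh]
  have key : Complex.Gamma (Complex.I * t + 1) * (starRingEnd ℂ) (Complex.Gamma (Complex.I * t + 1))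
      = ((π * t / Real.sinh (π * t) : ℝ) : ℂ) := by
    rw [← Complex.Gamma_conj]
    rw [show (starRingEnd ℂ) (Complex.I * t + 1) = 1 - Complex.I * t by
      simp [Complex.ext_iff]]
    rw [h1, mul_assoc, Complex.Gamma_mul_Gamma_one_sub, hsin, Complex.ofReal_div,
      mul_div_assoc', div_eq_div_iff (mul_ne_zero hs' Complex.I_ne_zero) hs']
    push_cast
    ring
  have h3 := Complex.mul_conj (Complex.Gamma (Complex.I * t + 1))
  rw [key] at h3
  have h2 : Complex.normSq (Complex.Gamma (Complex.I * t + 1)) = π * t / Real.sinh (π * t) := by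
    exact_mod_cast h3.symm
  rw [Complex.sq_norm, h2]

private lemma abs_Gamma_I_add_half_sq (t : ℝ) :
    (‖Complex.Gamma (Complex.I * t + 1/2)‖)^2 = π / Real.cosh (π * t) := by
  have hc : Real.cosh (π * t) ≠ 0 := (Real.cosh_pos _).ne'
  have hsin : Complex.sin (π * (Complex.I * t + 1/2)) = (Real.cosh (π * t) : ℂ) := by
    rw [show (π:ℂ) * (Complex.I * t + 1/2) = ((π * t : ℝ):ℂ) * Complex.I + (π:ℂ)/2 by
      push_cast; ring]
    rw [Complex.sin_add_pi_div_two, Complex.cos_mul_I, Complex.ofReal_cosh]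
  have key : Complex.Gamma (Complex.I * t + 1/2) *
      (starRingEnd ℂ) (Complex.Gamma (Complex.I * t + 1/2))
      = ((π / Real.cosh (π * t) : ℝ) : ℂ) := by
    rw [← Complex.Gamma_conj]
    rw [show (starRingEnd ℂ) (Complex.I * t + 1/2) = 1 - (Complex.I * t + 1/2) by
      simp [Complex.ext_iff]; norm_num]
    rw [Complex.Gamma_mul_Gamma_one_sub, hsin]
    push_cast
    ring
  have h3 := Complex.mul_conj (Complex.Gamma (Complex.I * t + 1/2))
  rw [key] at h3
  have h2 : Complex.normSq (Complex.Gamma (Complex.I * t + 1/2)) = π / Real.cosh (π * t) := by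
    exact_mod_cast h3.symm
  rw [Complex.sq_norm, h2]


private lemma evenBound (j : ℕ) : ∃ C : ℝ, 0 < C ∧ ∀ t : ℝ, 0 < t →
    (‖Complex.Gamma (Complex.I * t + ((j:ℂ) + 1))‖)^2 ≤
      C * (1+t)^(2*j) * (π * t / Real.sinh (π * t)) := by
  induction j with
  | zero =>
    exact ⟨1, one_pos, fun t ht => by
      simp [abs_Gamma_I_add_one_sq t ht]⟩
  | succ j ih =>
    obtain ⟨C, hC, hb⟩ := ih
    refine ⟨((j:ℝ)+1)^2 * C, by positivity, fun t ht => ?_⟩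
    have harg : Complex.I * t + (((j+1:ℕ):ℂ) + 1) = (Complex.I * t + ((j:ℂ) + 1)) + 1 := by
      push_cast; ring
    have hne : Complex.I * t + ((j:ℂ) + 1) ≠ 0 := by
      intro h
      have := congrArg Complex.im h
      simp at this
      exact ht.ne' this
    rw [harg, Complex.Gamma_add_one _ hne, norm_mul, mul_pow]
    have habs : (‖Complex.I * t + ((j:ℂ) + 1)‖)^2 = t^2 + ((j:ℝ)+1)^2 := by
      rw [Complex.sq_norm, Complex.normSq_apply]
      simp
      ring
    have hfac : t^2 + ((j:ℝ)+1)^2 ≤ ((j:ℝ)+1)^2 * (1+t)^2 := by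
      have h1 : (1:ℝ) ≤ ((j:ℝ)+1)^2 := by
        have h0 : (0:ℝ) ≤ (j:ℝ) := Nat.cast_nonneg j
        nlinarith
      nlinarith
    have hprev := hb t ht
    have hshp : (0:ℝ) < Real.sinh (π * t) := Real.sinh_pos_iff.mpr (by positivity)
    have hpos : (0:ℝ) ≤ π * t / Real.sinh (π * t) := by positivity
    calc (‖Complex.I * ↑t + ((j:ℂ) + 1)‖)^2 *
          (‖Complex.Gamma (Complex.I * ↑t + ((j:ℂ) + 1))‖)^2
        ≤ (((j:ℝ)+1)^2 * (1+t)^2) * (C * (1+t)^(2*j) * (π * t / Real.sinh (π * t))) := by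
          apply mul_le_mul (by rw [habs]; exact hfac) hprev (by positivity) (by positivity)
      _ = (((j:ℝ)+1)^2 * C) * (1+t)^(2*(j+1)) * (π * t / Real.sinh (π * t)) := by
          rw [show 2*(j+1) = 2*j+2 from by ring]
          ring

private lemma oddBound (j : ℕ) : ∃ C : ℝ, 0 < C ∧ ∀ t : ℝ, 0 < t →
    (‖Complex.Gamma (Complex.I * t + ((j:ℂ) + 1/2))‖)^2 ≤
      C * (1+t)^(2*j) * (π / Real.cosh (π * t)) := by
  induction j with
  | zero =>
    refine ⟨1, one_pos, fun t ht => ?_⟩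
    rw [show Complex.I * (t:ℂ) + (((0:ℕ):ℂ) + 1/2) = Complex.I * t + 1/2 by push_cast; ring,
      abs_Gamma_I_add_half_sq t]
    simp
  | succ j ih =>
    obtain ⟨C, hC, hb⟩ := ih
    refine ⟨((j:ℝ)+1)^2 * C, by positivity, fun t ht => ?_⟩
    have harg : Complex.I * t + (((j+1:ℕ):ℂ) + 1/2) = (Complex.I * t + ((j:ℂ) + 1/2)) + 1 := by
      push_cast; ring
    have hne : Complex.I * t + ((j:ℂ) + 1/2) ≠ 0 := by
      intro h
      have := congrArg Complex.im h
      simp at this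
      exact ht.ne' this
    rw [harg, Complex.Gamma_add_one _ hne, norm_mul, mul_pow]
    have habs : (‖Complex.I * t + ((j:ℂ) + 1/2)‖)^2 = t^2 + ((j:ℝ)+1/2)^2 := by
      rw [Complex.sq_norm, Complex.normSq_apply]
      simp
      ring
    have hfac : t^2 + ((j:ℝ)+1/2)^2 ≤ ((j:ℝ)+1)^2 * (1+t)^2 := by
      have h0 : (0:ℝ) ≤ (j:ℝ) := Nat.cast_nonneg j
      have e1 : ((j:ℝ)+1/2)^2 ≤ ((j:ℝ)+1)^2 := by nlinarith
      have e2 : t^2 ≤ ((j:ℝ)+1)^2 * t^2 := by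
        have h1 : (1:ℝ) ≤ ((j:ℝ)+1)^2 := by nlinarith
        nlinarith [sq_nonneg t, mul_le_mul_of_nonneg_right h1 (sq_nonneg t)]
      have e3 : ((j:ℝ)+1)^2 * (1+t^2) ≤ ((j:ℝ)+1)^2 * (1+t)^2 := by nlinarith [mul_pos ht ht, sq_nonneg ((j:ℝ)+1)]
      nlinarith
    have hprev := hb t ht
    have hpos : (0:ℝ) ≤ π / Real.cosh (π * t) := by
      have := Real.cosh_pos (π * t)
      positivity
    calc (‖Complex.I * ↑t + ((j:ℂ) + 1/2)‖)^2 *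
          (‖Complex.Gamma (Complex.I * ↑t + ((j:ℂ) + 1/2))‖)^2
        ≤ (((j:ℝ)+1)^2 * (1+t)^2) * (C * (1+t)^(2*j) * (π / Real.cosh (π * t))) := by
          apply mul_le_mul (by rw [habs]; exact hfac) hprev (by positivity) (by positivity)
      _ = (((j:ℝ)+1)^2 * C) * (1+t)^(2*(j+1)) * (π / Real.cosh (π * t)) := by
          rw [show 2*(j+1) = 2*j+2 from by ring]
          ring


private lemma hyp_EE {t : ℝ} (ht : 0 < t) :
    t^3 * (Real.cosh (π*t) / Real.sinh (π*t)) ≤ t^2 * (1+t) := by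
  have hx : 0 < π * t := by positivity
  have hs : 0 < Real.sinh (π*t) := Real.sinh_pos_iff.mpr hx
  have hcs : Real.cosh (π*t) - Real.sinh (π*t) = Real.exp (-(π*t)) := Real.cosh_sub_sinh _
  have he : Real.exp (-(π*t)) ≤ 1 := by
    rw [Real.exp_le_one_iff]; linarith
  have hxs : π * t ≤ Real.sinh (π*t) := (Real.self_lt_sinh_iff.mpr hx).le
  have h4 : π * t * Real.cosh (π*t) ≤ (1 + π*t) * Real.sinh (π*t) := by nlinarith
  rw [mul_div_assoc', div_le_iff₀ hs]
  have h5 := mul_le_mul_of_nonneg_left h4 (sq_nonneg t)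
  nlinarith [Real.pi_gt_three, sq_nonneg t, mul_pos (mul_pos ht ht) hs,
    mul_le_mul_of_nonneg_left hxs (mul_nonneg (sq_nonneg t) hs.le)]

private lemma hyp_OO {t : ℝ} (ht : 0 < t) :
    t * (Real.sinh (π*t) / Real.cosh (π*t)) * (1+t) ≤ (2*π*Real.exp (2*π) + 2) * t^2 := by
  have hc : 0 < Real.cosh (π*t) := Real.cosh_pos _
  rcases le_or_gt t 1 with h1 | h1
  · have hx : 0 < π * t := by positivity
    have he1 : Real.exp (-(2*(π*t))) ≥ 1 - 2*(π*t) := by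
      have := Real.add_one_le_exp (-(2*(π*t))); linarith
    have hee : Real.exp (π*t) * Real.exp (-(2*(π*t))) = Real.exp (-(π*t)) := by
      rw [← Real.exp_add]; ring_nf
    have hmono : Real.exp (π*t) ≤ Real.exp (2*(π*t)) := by
      apply Real.exp_le_exp.mpr; linarith
    have hs_le : Real.sinh (π*t) ≤ π*t * Real.exp (2*(π*t)) := by
      rw [Real.sinh_eq]
      nlinarith [Real.exp_pos (π*t), Real.exp_pos (2*(π*t))]
    have hexp2 : Real.exp (2*(π*t)) ≤ Real.exp (2*π) := by
      apply Real.exp_le_exp.mpr; nlinarith [Real.pi_pos]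
    have h2 : (1:ℝ) ≤ Real.cosh (π*t) := Real.one_le_cosh _
    have htanh : Real.sinh (π*t) / Real.cosh (π*t) ≤ π * t * Real.exp (2*π) := by
      rw [div_le_iff₀ hc]
      have e1 : π*t * Real.exp (2*(π*t)) ≤ π*t * Real.exp (2*π) :=
        mul_le_mul_of_nonneg_left hexp2 hx.le
      have e2 : π*t * Real.exp (2*π) ≤ π*t * Real.exp (2*π) * Real.cosh (π*t) :=
        le_mul_of_one_le_right (by positivity) h2
      linarith
    have hta : 0 ≤ Real.sinh (π*t) / Real.cosh (π*t) := by
      have := (Real.sinh_pos_iff.mpr hx).le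
      positivity
    have hb1 : t * (Real.sinh (π*t) / Real.cosh (π*t)) * (1+t) ≤
        t * (π * t * Real.exp (2*π)) * (1+t) := by
      apply mul_le_mul_of_nonneg_right _ (by linarith)
      exact mul_le_mul_of_nonneg_left htanh ht.le
    have hb2 : t * (π * t * Real.exp (2*π)) * (1+t) ≤ t * (π * t * Real.exp (2*π)) * 2 := by
      apply mul_le_mul_of_nonneg_left (by linarith)
      positivity
    nlinarith [Real.exp_pos (2*π), Real.pi_pos, sq_nonneg t]
  · have hlt : Real.sinh (π*t) / Real.cosh (π*t) ≤ 1 := by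
      rw [div_le_one hc]
      nlinarith [Real.cosh_sub_sinh (π*t), Real.exp_pos (-(π*t))]
    have hs : 0 ≤ Real.sinh (π*t) := by
      have hx : 0 < π*t := by positivity
      exact (Real.sinh_pos_iff.mpr hx).le
    have h3 : t * (Real.sinh (π*t)/Real.cosh (π*t)) * (1+t) ≤ t * 1 * (1+t) := by
      apply mul_le_mul_of_nonneg_right _ (by linarith)
      apply mul_le_mul_of_nonneg_left hlt ht.le
    have h4 : t ≤ t^2 := by nlinarith
    have h5 : 0 ≤ 2*π*Real.exp (2*π) * t^2 := by positivity
    nlinarith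


private lemma key (p k : ℕ) (hp : 1 ≤ p) (hk : 1 ≤ k) :
    ∃ C : ℝ, 0 < C ∧ ∀ t : ℝ, 0 < t →
      (‖Complex.Gamma (Complex.I*t + ((p:ℂ)+k)/2)‖)^2 *
      (‖Complex.Gamma (Complex.I*t + ((p:ℂ)+1)/2)‖)^2 *
      (2*t*Real.sinh (2*(π*t))) ≤ C * t^2 * (1+t)^(2*p+k-2) := by
  have hN₁ : 2 ≤ p + k := by omega
  rcases Nat.even_or_odd (p+k) with h₁ | h₁ <;> rcases Nat.even_or_odd (p+1) with h₂ | h₂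
  · -- EE
    obtain ⟨a₁, ha₁⟩ : ∃ a, p + k = 2*a+2 := by
      obtain ⟨b, hb⟩ := h₁; exact ⟨b-1, by omega⟩
    obtain ⟨a₂, ha₂⟩ : ∃ a, p + 1 = 2*a+2 := by
      obtain ⟨b, hb⟩ := h₂; exact ⟨b-1, by omega⟩
    obtain ⟨C₁, hC₁, hb₁⟩ := evenBound a₁
    obtain ⟨C₂, hC₂, hb₂⟩ := evenBound a₂
    refine ⟨4*π^2*C₁*C₂, by positivity, fun t ht => ?_⟩
    have hs : 0 < Real.sinh (π*t) := Real.sinh_pos_iff.mpr (by positivity)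
    have hc : 0 < Real.cosh (π*t) := Real.cosh_pos _
    have hsinh2 : 2*t*Real.sinh (2*(π*t)) = 4*t*Real.sinh (π*t)*Real.cosh (π*t) := by
      rw [Real.sinh_two_mul]; ring
    have harg₁ : Complex.I*(t:ℂ) + ((p:ℂ)+k)/2 = Complex.I*t + ((a₁:ℂ) + 1) := by
      have : ((p:ℂ)+k) = ((2*a₁+2 : ℕ) : ℂ) := by push_cast [← ha₁]; ring
      rw [this]; push_cast; ring
    have harg₂ : Complex.I*(t:ℂ) + ((p:ℂ)+1)/2 = Complex.I*t + ((a₂:ℂ) + 1) := by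
      have : ((p:ℂ)+1) = ((2*a₂+2 : ℕ) : ℂ) := by push_cast [← ha₂]; ring
      rw [this]; push_cast; ring
    rw [harg₁, harg₂, hsinh2]
    have hB₁ := hb₁ t ht
    have hB₂ := hb₂ t ht
    have h4tsc : (0:ℝ) ≤ 4*t*Real.sinh (π*t)*Real.cosh (π*t) := by positivity
    calc (‖Complex.Gamma (Complex.I*t + ((a₁:ℂ)+1))‖)^2 *
          (‖Complex.Gamma (Complex.I*t + ((a₂:ℂ)+1))‖)^2 *
          (4*t*Real.sinh (π*t)*Real.cosh (π*t))
        ≤ (C₁ * (1+t)^(2*a₁) * (π * t / Real.sinh (π * t))) *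
          (C₂ * (1+t)^(2*a₂) * (π * t / Real.sinh (π * t))) *
          (4*t*Real.sinh (π*t)*Real.cosh (π*t)) := by
          apply mul_le_mul_of_nonneg_right _ h4tsc
          exact mul_le_mul hB₁ hB₂ (sq_nonneg _) (by positivity)
      _ = (4*π^2*C₁*C₂) * ((1+t)^(2*a₁) * (1+t)^(2*a₂)) *
          (t^3 * (Real.cosh (π*t)/Real.sinh (π*t))) := by
          field_simp
      _ ≤ (4*π^2*C₁*C₂) * ((1+t)^(2*a₁) * (1+t)^(2*a₂)) * (t^2 * (1+t)) := by
          apply mul_le_mul_of_nonneg_left (hyp_EE ht) (by positivity)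
      _ = (4*π^2*C₁*C₂) * t^2 * ((1+t)^(2*a₁) * (1+t)^(2*a₂) * (1+t)) := by ring
      _ = (4*π^2*C₁*C₂) * t^2 * (1+t)^(2*p+k-2) := by
          rw [← pow_add, ← pow_succ, show 2*a₁+2*a₂+1 = 2*p+k-2 from by omega]
  · -- EO : p+k even, p+1 odd
    obtain ⟨a₁, ha₁⟩ : ∃ a, p + k = 2*a+2 := by
      obtain ⟨b, hb⟩ := h₁; exact ⟨b-1, by omega⟩
    obtain ⟨a₂, ha₂⟩ : ∃ a, p + 1 = 2*a+1 := h₂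
    obtain ⟨C₁, hC₁, hb₁⟩ := evenBound a₁
    obtain ⟨C₂, hC₂, hb₂⟩ := oddBound a₂
    refine ⟨4*π^2*C₁*C₂, by positivity, fun t ht => ?_⟩
    have hs : 0 < Real.sinh (π*t) := Real.sinh_pos_iff.mpr (by positivity)
    have hc : 0 < Real.cosh (π*t) := Real.cosh_pos _
    have hsinh2 : 2*t*Real.sinh (2*(π*t)) = 4*t*Real.sinh (π*t)*Real.cosh (π*t) := by
      rw [Real.sinh_two_mul]; ring
    have harg₁ : Complex.I*(t:ℂ) + ((p:ℂ)+k)/2 = Complex.I*t + ((a₁:ℂ) + 1) := by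
      have : ((p:ℂ)+k) = ((2*a₁+2 : ℕ) : ℂ) := by push_cast [← ha₁]; ring
      rw [this]; push_cast; ring
    have harg₂ : Complex.I*(t:ℂ) + ((p:ℂ)+1)/2 = Complex.I*t + ((a₂:ℂ) + 1/2) := by
      have : ((p:ℂ)+1) = ((2*a₂+1 : ℕ) : ℂ) := by push_cast [← ha₂]; ring
      rw [this]; push_cast; ring
    rw [harg₁, harg₂, hsinh2]
    have hB₁ := hb₁ t ht
    have hB₂ := hb₂ t ht
    have h4tsc : (0:ℝ) ≤ 4*t*Real.sinh (π*t)*Real.cosh (π*t) := by positivity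
    calc (‖Complex.Gamma (Complex.I*t + ((a₁:ℂ)+1))‖)^2 *
          (‖Complex.Gamma (Complex.I*t + ((a₂:ℂ)+1/2))‖)^2 *
          (4*t*Real.sinh (π*t)*Real.cosh (π*t))
        ≤ (C₁ * (1+t)^(2*a₁) * (π * t / Real.sinh (π * t))) *
          (C₂ * (1+t)^(2*a₂) * (π / Real.cosh (π * t))) *
          (4*t*Real.sinh (π*t)*Real.cosh (π*t)) := by
          apply mul_le_mul_of_nonneg_right _ h4tsc
          exact mul_le_mul hB₁ hB₂ (sq_nonneg _) (by positivity)
      _ = (4*π^2*C₁*C₂) * t^2 * ((1+t)^(2*a₁) * (1+t)^(2*a₂)) := by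
          field_simp
      _ = (4*π^2*C₁*C₂) * t^2 * (1+t)^(2*p+k-2) := by
          rw [← pow_add, show 2*a₁+2*a₂ = 2*p+k-2 from by omega]
  · -- OE : p+k odd, p+1 even
    obtain ⟨a₁, ha₁⟩ : ∃ a, p + k = 2*a+1 := h₁
    obtain ⟨a₂, ha₂⟩ : ∃ a, p + 1 = 2*a+2 := by
      obtain ⟨b, hb⟩ := h₂; exact ⟨b-1, by omega⟩
    obtain ⟨C₁, hC₁, hb₁⟩ := oddBound a₁
    obtain ⟨C₂, hC₂, hb₂⟩ := evenBound a₂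
    refine ⟨4*π^2*C₁*C₂, by positivity, fun t ht => ?_⟩
    have hs : 0 < Real.sinh (π*t) := Real.sinh_pos_iff.mpr (by positivity)
    have hc : 0 < Real.cosh (π*t) := Real.cosh_pos _
    have hsinh2 : 2*t*Real.sinh (2*(π*t)) = 4*t*Real.sinh (π*t)*Real.cosh (π*t) := by
      rw [Real.sinh_two_mul]; ring
    have harg₁ : Complex.I*(t:ℂ) + ((p:ℂ)+k)/2 = Complex.I*t + ((a₁:ℂ) + 1/2) := by
      have : ((p:ℂ)+k) = ((2*a₁+1 : ℕ) : ℂ) := by push_cast [← ha₁]; ring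
      rw [this]; push_cast; ring
    have harg₂ : Complex.I*(t:ℂ) + ((p:ℂ)+1)/2 = Complex.I*t + ((a₂:ℂ) + 1) := by
      have : ((p:ℂ)+1) = ((2*a₂+2 : ℕ) : ℂ) := by push_cast [← ha₂]; ring
      rw [this]; push_cast; ring
    rw [harg₁, harg₂, hsinh2]
    have hB₁ := hb₁ t ht
    have hB₂ := hb₂ t ht
    have h4tsc : (0:ℝ) ≤ 4*t*Real.sinh (π*t)*Real.cosh (π*t) := by positivity
    calc (‖Complex.Gamma (Complex.I*t + ((a₁:ℂ)+1/2))‖)^2 *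
          (‖Complex.Gamma (Complex.I*t + ((a₂:ℂ)+1))‖)^2 *
          (4*t*Real.sinh (π*t)*Real.cosh (π*t))
        ≤ (C₁ * (1+t)^(2*a₁) * (π / Real.cosh (π * t))) *
          (C₂ * (1+t)^(2*a₂) * (π * t / Real.sinh (π * t))) *
          (4*t*Real.sinh (π*t)*Real.cosh (π*t)) := by
          apply mul_le_mul_of_nonneg_right _ h4tsc
          exact mul_le_mul hB₁ hB₂ (sq_nonneg _) (by positivity)
      _ = (4*π^2*C₁*C₂) * t^2 * ((1+t)^(2*a₁) * (1+t)^(2*a₂)) := by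
          field_simp
      _ = (4*π^2*C₁*C₂) * t^2 * (1+t)^(2*p+k-2) := by
          rw [← pow_add, show 2*a₁+2*a₂ = 2*p+k-2 from by omega]
  · -- OO : both odd
    obtain ⟨a₁, ha₁⟩ : ∃ a, p + k = 2*a+1 := h₁
    obtain ⟨a₂, ha₂⟩ : ∃ a, p + 1 = 2*a+1 := h₂
    obtain ⟨C₁, hC₁, hb₁⟩ := oddBound a₁
    obtain ⟨C₂, hC₂, hb₂⟩ := oddBound a₂
    refine ⟨4*π^2*C₁*C₂*(2*π*Real.exp (2*π) + 2), by positivity, fun t ht => ?_⟩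
    have hs : 0 < Real.sinh (π*t) := Real.sinh_pos_iff.mpr (by positivity)
    have hc : 0 < Real.cosh (π*t) := Real.cosh_pos _
    have hsinh2 : 2*t*Real.sinh (2*(π*t)) = 4*t*Real.sinh (π*t)*Real.cosh (π*t) := by
      rw [Real.sinh_two_mul]; ring
    have harg₁ : Complex.I*(t:ℂ) + ((p:ℂ)+k)/2 = Complex.I*t + ((a₁:ℂ) + 1/2) := by
      have : ((p:ℂ)+k) = ((2*a₁+1 : ℕ) : ℂ) := by push_cast [← ha₁]; ring
      rw [this]; push_cast; ring
    have harg₂ : Complex.I*(t:ℂ) + ((p:ℂ)+1)/2 = Complex.I*t + ((a₂:ℂ) + 1/2) := by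
      have : ((p:ℂ)+1) = ((2*a₂+1 : ℕ) : ℂ) := by push_cast [← ha₂]; ring
      rw [this]; push_cast; ring
    rw [harg₁, harg₂, hsinh2]
    have hB₁ := hb₁ t ht
    have hB₂ := hb₂ t ht
    have h4tsc : (0:ℝ) ≤ 4*t*Real.sinh (π*t)*Real.cosh (π*t) := by positivity
    have hexp : 2*a₁ + 2*a₂ = (2*p+k-2) + 1 := by omega
    calc (‖Complex.Gamma (Complex.I*t + ((a₁:ℂ)+1/2))‖)^2 *
          (‖Complex.Gamma (Complex.I*t + ((a₂:ℂ)+1/2))‖)^2 *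
          (4*t*Real.sinh (π*t)*Real.cosh (π*t))
        ≤ (C₁ * (1+t)^(2*a₁) * (π / Real.cosh (π * t))) *
          (C₂ * (1+t)^(2*a₂) * (π / Real.cosh (π * t))) *
          (4*t*Real.sinh (π*t)*Real.cosh (π*t)) := by
          apply mul_le_mul_of_nonneg_right _ h4tsc
          exact mul_le_mul hB₁ hB₂ (sq_nonneg _) (by positivity)
      _ = (4*π^2*C₁*C₂) * ((1+t)^(2*a₁) * (1+t)^(2*a₂)) *
          (t * (Real.sinh (π*t)/Real.cosh (π*t))) := by
          field_simp
      _ = (4*π^2*C₁*C₂) * (1+t)^(2*p+k-2) *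
          (t * (Real.sinh (π*t)/Real.cosh (π*t)) * (1+t)) := by
          rw [← pow_add, hexp, pow_succ]
          ring
      _ ≤ (4*π^2*C₁*C₂) * (1+t)^(2*p+k-2) * ((2*π*Real.exp (2*π) + 2) * t^2) := by
          apply mul_le_mul_of_nonneg_left (hyp_OO ht) (by positivity)
      _ = (4*π^2*C₁*C₂*(2*π*Real.exp (2*π) + 2)) * t^2 * (1+t)^(2*p+k-2) := by ring


private lemma abs_Gamma_two_I_sq (t : ℝ) (ht : 0 < t) :
    (‖Complex.Gamma (2*Complex.I*(t:ℂ))‖)^2 = π / (2*t*Real.sinh (2*(π*t))) := by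
  have h1 := abs_Gamma_I_add_one_sq (2*t) (by positivity)
  have h0 : Complex.I * ((2*t:ℝ):ℂ) ≠ 0 := by
    simp [Complex.ext_iff]; intro h; linarith
  have h2 : Complex.Gamma (Complex.I*((2*t:ℝ):ℂ) + 1)
      = Complex.I*((2*t:ℝ):ℂ) * Complex.Gamma (Complex.I*((2*t:ℝ):ℂ)) :=
    Complex.Gamma_add_one _ h0
  rw [h2, norm_mul, mul_pow] at h1
  have h3 : (‖Complex.I*((2*t:ℝ):ℂ)‖)^2 = 4*t^2 := by
    rw [Complex.sq_norm, Complex.normSq_apply]; simp; ring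
  rw [h3] at h1
  have h4 : Complex.I*((2*t:ℝ):ℂ) = 2*Complex.I*(t:ℂ) := by push_cast; ring
  rw [h4] at h1
  have h5 : π * (2*t) = 2*(π*t) := by ring
  rw [h5] at h1
  have hs : 0 < Real.sinh (2*(π*t)) := Real.sinh_pos_iff.mpr (by positivity)
  field_simp at h1 ⊢
  nlinarith [h1]

private lemma cFun_ne_zero (m k : ℕ) (hk : 1 ≤ k) (t : ℝ) (ht : t ≠ 0) : cFun m k (t:ℂ) ≠ 0 := by
  unfold cFun
  apply div_ne_zero
  · apply mul_ne_zero (mul_ne_zero ?_ ?_) ?_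
    · apply Complex.Gamma_ne_zero_of_re_pos
      have : (((m:ℂ)+k+1)/2) = (((m+k+1:ℝ)/2 : ℝ) : ℂ) := by push_cast; ring
      rw [this, Complex.ofReal_re]
      positivity
    · rw [Complex.cpow_def_of_ne_zero (by norm_num)]
      exact Complex.exp_ne_zero _
    · apply Complex.Gamma_ne_zero
      intro n h
      have := congrArg Complex.im h
      simp at this
      exact ht this
  · have h1 : (1:ℝ) ≤ (k:ℝ) := by exact_mod_cast hk
    apply mul_ne_zero <;> apply Complex.Gamma_ne_zero_of_re_pos
    · have e : Complex.I * (t:ℂ) + ((m:ℂ)/2+k)/2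
          = Complex.I * (t:ℂ) + ((((m:ℝ)/2+k)/2 : ℝ) : ℂ) := by push_cast; ring
      rw [e]
      simp [Complex.add_re]
      positivity
    · have e : Complex.I * (t:ℂ) + (m:ℂ)/4 + 1/2
          = Complex.I * (t:ℂ) + ((((m:ℝ)/4 + 1/2) : ℝ) : ℂ) := by push_cast; ring
      rw [e]
      simp [Complex.add_re]
      positivity


private lemma abs_two_cpow (m k : ℕ) (t : ℝ) :
    ‖(2:ℂ) ^ (((m : ℂ) / 2 + k) - 2 * Complex.I * (t:ℂ))‖
      = (2:ℝ) ^ ((m:ℝ)/2 + k) := by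
  have e : (((m : ℂ) / 2 + k) - 2 * Complex.I * (t:ℂ))
      = ((((m:ℝ)/2 + k) : ℝ) : ℂ) - 2 * Complex.I * (t:ℂ) := by push_cast; ring
  have hb : ((2:ℝ):ℂ) = (2:ℂ) := by norm_num
  rw [e, ← hb, Complex.norm_cpow_eq_rpow_re_of_pos (by norm_num : (0:ℝ) < 2)]
  congr 1
  simp

private lemma abs_cFun_neg (m k : ℕ) (t : ℝ) :
    ‖cFun m k ((-t : ℝ):ℂ)‖ = ‖cFun m k (t:ℂ)‖ := by
  unfold cFun
  simp only [norm_div, norm_mul, abs_two_cpow]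
  have e3 : (2 * Complex.I * ((-t:ℝ):ℂ)) = (starRingEnd ℂ) (2 * Complex.I * (t:ℂ)) := by
    simp [Complex.ext_iff]
  have e4 : (Complex.I * ((-t:ℝ):ℂ) + ((m:ℂ)/2+k)/2)
      = (starRingEnd ℂ) (Complex.I * (t:ℂ) + ((m:ℂ)/2+k)/2) := by
    simp [Complex.ext_iff, map_ofNat]
  have e5 : (Complex.I * ((-t:ℝ):ℂ) + (m:ℂ)/4 + 1/2)
      = (starRingEnd ℂ) (Complex.I * (t:ℂ) + (m:ℂ)/4 + 1/2) := by
    simp [Complex.ext_iff, map_ofNat]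
  rw [e3, e4, e5, Complex.Gamma_conj, Complex.Gamma_conj, Complex.Gamma_conj,
    Complex.norm_conj, Complex.norm_conj, Complex.norm_conj]

private lemma abs_cFun_formula (m k p : ℕ) (hm : m = p + p) (hk : 1 ≤ k) (hp : 1 ≤ p)
    (t : ℝ) (ht : 0 < t) :
    ((‖cFun m k (t:ℂ)‖)⁻¹)^2 =
      (‖Complex.Gamma (Complex.I*t + ((p:ℂ)+k)/2)‖)^2 *
      (‖Complex.Gamma (Complex.I*t + ((p:ℂ)+1)/2)‖)^2 *
      (2*t*Real.sinh (2*(π*t))) /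
      (π * (Real.Gamma ((m+k+1:ℝ)/2))^2 * ((2:ℝ) ^ ((m:ℝ)/2 + (k:ℝ)))^2) := by
  have hd1 : Complex.I*(t:ℂ) + ((m:ℂ)/2+k)/2 = Complex.I*t + ((p:ℂ)+k)/2 := by
    subst hm; push_cast; ring
  have hd2 : Complex.I*(t:ℂ) + (m:ℂ)/4 + 1/2 = Complex.I*t + ((p:ℂ)+1)/2 := by
    subst hm; push_cast; ring
  have hG : ‖Complex.Gamma (((m:ℂ)+k+1)/2)‖ = Real.Gamma ((m+k+1:ℝ)/2) := by
    rw [show (((m:ℂ)+k+1)/2) = (((m+k+1:ℝ)/2 : ℝ) : ℂ) by push_cast; ring,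
      Complex.Gamma_ofReal, Complex.norm_real, Real.norm_eq_abs,
      abs_of_pos (Real.Gamma_pos_of_pos (by positivity))]
  -- positivity facts
  have hGpos : 0 < Real.Gamma ((m+k+1:ℝ)/2) := Real.Gamma_pos_of_pos (by positivity)
  have hk1 : (1:ℝ) ≤ (k:ℝ) := by exact_mod_cast hk
  have hD1 : 0 < ‖Complex.Gamma (Complex.I*t + ((p:ℂ)+k)/2)‖ := by
    rw [norm_pos_iff]
    apply Complex.Gamma_ne_zero_of_re_pos
    rw [show Complex.I*(t:ℂ) + ((p:ℂ)+k)/2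
        = Complex.I*(t:ℂ) + (((((p:ℝ)+k)/2) : ℝ) : ℂ) by push_cast; ring]
    simp [Complex.add_re]
    positivity
  have hD2 : 0 < ‖Complex.Gamma (Complex.I*t + ((p:ℂ)+1)/2)‖ := by
    rw [norm_pos_iff]
    apply Complex.Gamma_ne_zero_of_re_pos
    rw [show Complex.I*(t:ℂ) + ((p:ℂ)+1)/2
        = Complex.I*(t:ℂ) + (((((p:ℝ)+1)/2) : ℝ) : ℂ) by push_cast; ring]
    simp [Complex.add_re]
    positivity
  have hg2pos : (0:ℝ) < ‖Complex.Gamma (2*Complex.I*(t:ℂ))‖ := by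
    rw [norm_pos_iff]
    apply Complex.Gamma_ne_zero
    intro n h
    have := congrArg Complex.im h
    simp at this
    exact ht.ne' this
  have hs2 : 0 < Real.sinh (2*(π*t)) := Real.sinh_pos_iff.mpr (by positivity)
  have hg2 : (‖Complex.Gamma (2*Complex.I*(t:ℂ))‖)^2
      = π / (2*t*Real.sinh (2*(π*t))) := abs_Gamma_two_I_sq t ht
  -- main computation
  unfold cFun
  rw [norm_div, norm_mul, norm_mul, norm_mul, abs_two_cpow, hG, hd1, hd2]
  rw [show ((m:ℝ)/2 + (k:ℕ)) = ((m:ℝ)/2 + (k:ℝ)) from rfl]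
  set D1 := ‖Complex.Gamma (Complex.I*t + ((p:ℂ)+k)/2)‖
  set D2 := ‖Complex.Gamma (Complex.I*t + ((p:ℂ)+1)/2)‖
  set g2 := ‖Complex.Gamma (2*Complex.I*(t:ℂ))‖
  set G := Real.Gamma ((m+k+1:ℝ)/2)
  set R := (2:ℝ) ^ ((m:ℝ)/2 + (k:ℝ))
  have hR : 0 < R := by positivity
  rw [inv_pow, div_pow, mul_pow, mul_pow, hg2]
  rw [inv_eq_iff_eq_inv, inv_div]
  field_simp


private lemma main_pos (m k p : ℕ) (hm : m = p + p) (hp : 1 ≤ p) (hk : 1 ≤ k) :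
    ∃ C : ℝ, 0 < C ∧ ∀ t : ℝ, 0 < t →
      ((‖cFun m k (t:ℂ)‖)⁻¹)^2 ≤ C * t^2 * (1+t)^(m+k+1-3) := by
  obtain ⟨CK, hCK, hb⟩ := key p k hp hk
  have hGpos : 0 < Real.Gamma ((m+k+1:ℝ)/2) := Real.Gamma_pos_of_pos (by positivity)
  set D := π * (Real.Gamma ((m+k+1:ℝ)/2))^2 * ((2:ℝ) ^ ((m:ℝ)/2 + (k:ℝ)))^2 with hD
  have hDpos : 0 < D := by positivity
  refine ⟨CK / D, by positivity, fun t ht => ?_⟩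
  rw [abs_cFun_formula m k p hm hk hp t ht]
  have hE : 2*p+k-2 = m+k+1-3 := by omega
  have h1 := hb t ht
  rw [hE] at h1
  have step : (‖Complex.Gamma (Complex.I*t + ((p:ℂ)+k)/2)‖)^2 *
      (‖Complex.Gamma (Complex.I*t + ((p:ℂ)+1)/2)‖)^2 *
      (2*t*Real.sinh (2*(π*t))) / D ≤ (CK * t^2 * (1+t)^(m+k+1-3)) / D := by
    apply div_le_div_of_nonneg_right h1 hDpos.le
  refine le_trans step (le_of_eq ?_)
  ring

end Auxiliary

/-- There is `C > 0` such that for all real `λ ≠ 0`, `c(λ) ≠ 0` and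
`|c(λ)|⁻² ≤ C λ² (1 + |λ|)^{n-3}`, where `n = m + k + 1`. -/
theorem stmt3 (m k : ℕ) (hm : Even m) (hm2 : 2 ≤ m) (hk : 1 ≤ k) :
    ∃ C : ℝ, 0 < C ∧ ∀ lam : ℝ, lam ≠ 0 →
      cFun m k (lam : ℂ) ≠ 0 ∧
      ((‖cFun m k (lam : ℂ)‖)⁻¹) ^ 2 ≤
        C * lam ^ 2 * (1 + |lam|) ^ (m + k + 1 - 3) := by
  obtain ⟨p, hp2⟩ := hm
  have hp : 1 ≤ p := by omega
  obtain ⟨C, hC, hb⟩ := main_pos m k p hp2 hp hk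
  refine ⟨C, hC, fun lam hlam => ⟨cFun_ne_zero m k hk lam hlam, ?_⟩⟩
  rcases lt_trichotomy lam 0 with h | h | h
  · have h1 := hb (-lam) (by linarith)
    have h2 : ‖cFun m k ((-lam : ℝ):ℂ)‖ = ‖cFun m k (lam:ℂ)‖ :=
      abs_cFun_neg m k lam
    rw [h2] at h1
    rw [abs_of_neg h]
    rw [show C * lam^2 * (1 + -lam)^(m+k+1-3) = C * (-lam)^2 * (1 + -lam)^(m+k+1-3) by ring]
    exact h1
  · exact absurd h hlam
  · have h1 := hb lam h
    rw [abs_of_pos h]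
    exact h1
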